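/- For every natural number n ≥ 5, the number of primes p with p ≤ n-1, where 1 is counted as a prime (i.e., 1 plus the usual prime-counting function π(n-1)), equals 3 + Σ_{k=5}^{n-1} sin((k-1)!·π/k)/sin(π/k). -/

import Mathlib

open Finset
open scoped Nat

/-- If `x ≠ y`, both positive and `< k`, then `x*y ∣ (k-1)!`. -/
lemma aux_mul_dvd_factorial {x y k : ℕ} (hxy : x ≠ y) (hx : 1 ≤ x) (hy : 1 ≤ y)
    (hxk : x < k) (hyk : y < k) : x * y ∣ (k - 1)! := by
  have hk1 : 1 ≤ k := hx.trans hxk.le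
  have hfac : ∏ i ∈ Ico 1 k, i = (k - 1)! := by
    rw [← Finset.prod_Ico_id_eq_factorial (k - 1)]
    congr 1
  have hsub : ({x, y} : Finset ℕ) ⊆ Ico 1 k := by
    intro a ha
    simp only [mem_insert, mem_singleton] at ha
    rcases ha with rfl | rfl <;> simp [mem_Ico, hx, hy, hxk, hyk]
  have hdvd : ∏ i ∈ ({x, y} : Finset ℕ), i ∣ ∏ i ∈ Ico 1 k, i :=
    Finset.prod_dvd_prod_of_subset _ _ _ hsub
  rwa [Finset.prod_pair hxy, hfac] at hdvd

/-- For composite `k ≥ 5`, `k ∣ (k-1)!`. -/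
lemma aux_dvd_factorial_of_not_prime {k : ℕ} (hk : 5 ≤ k) (h : ¬ k.Prime) :
    k ∣ (k - 1)! := by
  have hk1 : 1 < k := by omega
  obtain ⟨a, ha, ha1, hak⟩ := Nat.exists_dvd_of_not_prime2 hk1 h
  obtain ⟨b, hb⟩ := ha
  have hb1 : 1 < b := by
    rcases Nat.lt_or_ge b 2 with h' | h'
    · interval_cases b <;> omega
    · omega
  have hbk : b < k := by
    rcases Nat.lt_or_ge b k with h' | h'
    · exact h'
    · exfalso; nlinarith
  rcases eq_or_ne a b with rfl | hab
  · -- k = a^2, a ≥ 3 since k ≥ 5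
    have ha3 : 3 ≤ a := by nlinarith
    have h2a : 2 * a < k := by nlinarith
    have : a * (2 * a) ∣ (k - 1)! :=
      aux_mul_dvd_factorial (by omega) (by omega) (by omega) hak h2a
    have hkd : k ∣ a * (2 * a) := ⟨2, by rw [hb]; ring⟩
    exact hkd.trans this
  · have : a * b ∣ (k - 1)! :=
      aux_mul_dvd_factorial hab (by omega) (by omega) hak hbk
    rwa [← hb] at this

lemma aux_term (k : ℕ) (hk : 5 ≤ k) :
    Real.sin (((k - 1)! : ℝ) * Real.pi / k) / Real.sin (Real.pi / k)
      = if k.Prime then (1 : ℝ) else 0 := by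
  have hk0 : (0 : ℝ) < (k : ℝ) := by positivity
  by_cases hp : k.Prime
  · simp only [hp, if_true]
    -- Wilson: k ∣ (k-1)! + 1
    haveI : Fact k.Prime := ⟨hp⟩
    have hw : (((k - 1)! : ℕ) : ZMod k) = -1 := ZMod.wilsons_lemma k
    have hdvd : k ∣ (k - 1)! + 1 := by
      have : (((k - 1)! + 1 : ℕ) : ZMod k) = 0 := by push_cast [hw]; ring
      exact (ZMod.natCast_eq_zero_iff _ _).mp this
    obtain ⟨m, hm⟩ := hdvd
    -- m is odd
    have h2 : 2 ∣ (k - 1)! := Nat.dvd_factorial (by omega) (by omega)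
    have hmodd : Odd m := by
      have hodd : Odd ((k - 1)! + 1) := by
        obtain ⟨c, hc⟩ := h2
        exact ⟨c, by omega⟩
      rw [hm, Nat.odd_mul] at hodd
      exact hodd.2
    obtain ⟨j, hj⟩ := hmodd
    have hfac : ((k - 1)! : ℝ) = m * k - 1 := by
      have : ((k - 1)! : ℝ) + 1 = (k : ℝ) * m := by
        have := congrArg (fun x : ℕ => (x : ℝ)) hm
        push_cast at this
        linarith
      linarith
    have harg : ((k - 1)! : ℝ) * Real.pi / k = (Real.pi - Real.pi / k) + j * (2 * Real.pi) := by
      rw [hfac]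
      have hm' : (m : ℝ) = 2 * j + 1 := by exact_mod_cast congrArg (fun x : ℕ => (x : ℝ)) hj
      field_simp
      ring_nf
      rw [hm']
      ring
    rw [harg, Real.sin_add_nat_mul_two_pi, Real.sin_pi_sub]
    have hpos : 0 < Real.sin (Real.pi / k) := by
      apply Real.sin_pos_of_pos_of_lt_pi
      · positivity
      · rw [div_lt_iff₀ hk0]
        have hk5 : (5 : ℝ) ≤ (k : ℝ) := by exact_mod_cast hk
        nlinarith [Real.pi_pos]
    exact div_self hpos.ne'
  · simp only [hp, if_false]
    obtain ⟨m, hm⟩ := aux_dvd_factorial_of_not_prime hk hp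
    have harg : ((k - 1)! : ℝ) * Real.pi / k = m * Real.pi := by
      rw [hm]; push_cast; field_simp
    rw [harg, Real.sin_nat_mul_pi, zero_div]

theorem barrett_counts_primes_with_one (n : ℕ) (hn : 5 ≤ n) :
    ((1 + Nat.primeCounting (n - 1) : ℕ) : ℝ)
      = 3 + ∑ k ∈ Finset.Icc 5 (n - 1),
          Real.sin (((Nat.factorial (k - 1)) : ℝ) * Real.pi / k) / Real.sin (Real.pi / k) := by
  have hsum : ∑ k ∈ Finset.Icc 5 (n - 1),
      Real.sin (((k - 1)! : ℝ) * Real.pi / k) / Real.sin (Real.pi / k)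
      = ∑ k ∈ Finset.Icc 5 (n - 1), (if k.Prime then (1 : ℝ) else 0) := by
    apply Finset.sum_congr rfl
    intro k hk
    rw [Finset.mem_Icc] at hk
    exact aux_term k hk.1
  rw [hsum, Finset.sum_boole]
  -- relate card to primeCounting
  have hIcc : Finset.Icc 5 (n - 1) = Finset.Ico 5 n := by
    rw [← Finset.Ico_add_one_right_eq_Icc]
    congr 1
    omega
  have hcount : Nat.primeCounting (n - 1)
      = ((Finset.range 5).filter Nat.Prime).card
        + ((Finset.Ico 5 n).filter Nat.Prime).card := by
    have h1 : Nat.primeCounting (n - 1) = Nat.count Nat.Prime n := by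
      unfold Nat.primeCounting Nat.primeCounting'
      congr 1
      omega
    rw [h1, Nat.count_eq_card_filter_range]
    have hr : Finset.range n = Finset.Ico 0 5 ∪ Finset.Ico 5 n := by
      rw [Finset.Ico_union_Ico_eq_Ico (by omega) (by omega), Finset.range_eq_Ico]
    rw [hr, Finset.filter_union, Finset.card_union_of_disjoint]
    · rfl
    · exact Finset.disjoint_filter_filter (Finset.Ico_disjoint_Ico_consecutive 0 5 n)
  have h5 : ((Finset.range 5).filter Nat.Prime).card = 2 := by decide
  rw [hIcc]
  rw [hcount, h5]
  push_cast
  ring
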